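/- Lower bound for the Assouad spectrum of X = {1/n : n ≥ 1} at small θ: for every θ ∈ (0,1/2) there exists c > 0 such that for all r ∈ (0,1/2), N_r(X ∩ B(0, r^θ)) ≥ c·(r^θ/r)^{(1/2)/(1-θ)}. -/

import Mathlib

open Set Metric

noncomputable section

/-- `coversWith X r n` : `X` can be covered by `n` sets each of diameter at most `r`. -/
def coversWith {α : Type*} [PseudoMetricSpace α] (X : Set α) (r : ℝ) (n : ℕ) : Prop :=
  ∃ B : Fin n → Set α, (∀ i, EMetric.diam (B i) ≤ ENNReal.ofReal r) ∧ X ⊆ ⋃ i, B i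

/-- The covering number `N_r(X)`: the minimal number of sets of diameter at most `r`
needed to cover `X`. -/
noncomputable def coverNum {α : Type*} [PseudoMetricSpace α] (X : Set α) (r : ℝ) : ℕ :=
  sInf {n : ℕ | coversWith X r n}

/-- Upper box dimension: infimum of `s ≥ 0` such that `N_r(X) ≤ C r^{-s}` for all `r ∈ (0,1)`. -/
noncomputable def upperBoxDim {α : Type*} [PseudoMetricSpace α] (X : Set α) : ℝ :=
  sInf {s : ℝ | 0 ≤ s ∧ ∃ C > (0:ℝ), ∀ r ∈ Ioo (0:ℝ) 1,
    (coverNum X r : ℝ) ≤ C * r ^ (-s)}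

/-- Assouad dimension (localisation at arbitrary centres `x`). -/
noncomputable def assouadDim {α : Type*} [PseudoMetricSpace α] (X : Set α) : ℝ :=
  sInf {s : ℝ | 0 ≤ s ∧ ∃ C > (0:ℝ), ∀ R > (0:ℝ), ∀ r ∈ Ioo (0:ℝ) R, ∀ x : α,
    (coverNum (X ∩ closedBall x R) r : ℝ) ≤ C * (R / r) ^ s}

/-- Assouad dimension (localisation at centres `x ∈ X`). -/
noncomputable def assouadDimOn {α : Type*} [PseudoMetricSpace α] (X : Set α) : ℝ :=
  sInf {s : ℝ | 0 ≤ s ∧ ∃ C > (0:ℝ), ∀ R > (0:ℝ), ∀ r ∈ Ioo (0:ℝ) R, ∀ x ∈ X,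
    (coverNum (X ∩ closedBall x R) r : ℝ) ≤ C * (R / r) ^ s}

/-- Upper θ-intermediate dimension, for `θ ∈ (0,1]`: infimum of `s ≥ 0` such that for all
`ε > 0` and all sufficiently small `δ ∈ (0,1)` there is a cover of `X` with all diameters in
`[δ^(1/θ), δ]` and `s`-cost less than `ε`. -/
noncomputable def interDim {α : Type*} [PseudoMetricSpace α] (θ : ℝ) (X : Set α) : ℝ :=
  sInf {s : ℝ | 0 ≤ s ∧ ∀ ε > (0:ℝ), ∃ δ₀ ∈ Ioo (0:ℝ) 1, ∀ δ ∈ Ioo (0:ℝ) δ₀,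
    ∃ n, ∃ B : Fin n → Set α, X ⊆ (⋃ i, B i) ∧
      (∀ i, Metric.diam (B i) ∈ Icc (δ ^ (1/θ)) δ) ∧
      ∑ i, Metric.diam (B i) ^ s < ε}

/-- Assouad spectrum at `θ` (localisation at arbitrary centres `x`). -/
noncomputable def assouadSpec {α : Type*} [PseudoMetricSpace α] (θ : ℝ) (X : Set α) : ℝ :=
  sInf {s : ℝ | 0 ≤ s ∧ ∃ C > (0:ℝ), ∀ r ∈ Ioo (0:ℝ) 1, ∀ x : α,
    (coverNum (X ∩ closedBall x (r ^ θ)) r : ℝ) ≤ C * (r ^ θ / r) ^ s}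

/-- Assouad spectrum at `θ` (localisation at centres `x ∈ X`). -/
noncomputable def assouadSpecOn {α : Type*} [PseudoMetricSpace α] (θ : ℝ) (X : Set α) : ℝ :=
  sInf {s : ℝ | 0 ≤ s ∧ ∃ C > (0:ℝ), ∀ r ∈ Ioo (0:ℝ) 1, ∀ x ∈ X,
    (coverNum (X ∩ closedBall x (r ^ θ)) r : ℝ) ≤ C * (r ^ θ / r) ^ s}

/-- The set `X = {1/n : n ∈ ℕ, n ≥ 1} ⊆ ℝ`. -/
def recipSet : Set ℝ := {x : ℝ | ∃ n : ℕ, 1 ≤ n ∧ x = 1 / (n : ℝ)}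

end
lemma coversWith_recipSet {r : ℝ} (hr : 0 < r) :
    coversWith recipSet r (⌈1/r⌉₊ + 1) := by
  classical
  set N := ⌈1/r⌉₊ with hN
  refine ⟨fun i => if i.val = 0 then Icc 0 r else {1/(i.val:ℝ)}, ?_, ?_⟩
  · intro i
    by_cases h : i.val = 0
    · simp only [h, if_pos]
      rw [EMetric.diam, Real.ediam_Icc]
      simp
    · simp [h, EMetric.diam]
  · rintro x ⟨n, hn1, rfl⟩
    by_cases h : n ≤ N
    · refine mem_iUnion.2 ⟨⟨n, by omega⟩, ?_⟩
      simp [show n ≠ 0 by omega]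
    · refine mem_iUnion.2 ⟨⟨0, by omega⟩, ?_⟩
      have hNr : (1:ℝ)/r ≤ N := Nat.le_ceil _
      have hnN : (N:ℝ) < n := by exact_mod_cast Nat.lt_of_not_le h
      have hnpos : (0:ℝ) < n := by positivity
      have h1 : (1:ℝ)/r < n := lt_of_le_of_lt hNr hnN
      have : 1/(n:ℝ) ≤ r := by
        rw [div_le_iff₀ hnpos]
        rw [div_lt_iff₀ hr] at h1
        linarith
      simp only [if_pos rfl]
      exact ⟨by positivity, this⟩

lemma card_le_coverNum {X : Set ℝ} {r : ℝ} (hr : 0 < r) (P : Finset ℝ)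
    (hP : ∀ p ∈ P, p ∈ X) (hsep : ∀ p ∈ P, ∀ q ∈ P, p ≠ q → r < dist p q)
    (hex : ∃ n, coversWith X r n) :
    P.card ≤ coverNum X r := by
  classical
  have hne : {n : ℕ | coversWith X r n}.Nonempty := hex
  obtain ⟨B, hdiam, hcov⟩ : coversWith X r (coverNum X r) := Nat.sInf_mem hne
  rcases P.eq_empty_or_nonempty with h | ⟨p0, hp0⟩
  · simp [h]
  obtain ⟨i0, -⟩ := mem_iUnion.mp (hcov (hP p0 hp0))
  have hch : ∀ p : ℝ, ∃ i : Fin (coverNum X r), p ∈ P → p ∈ B i := by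
    intro p
    by_cases hp : p ∈ P
    · obtain ⟨i, hi⟩ := mem_iUnion.mp (hcov (hP p hp))
      exact ⟨i, fun _ => hi⟩
    · exact ⟨i0, fun h => absurd h hp⟩
  choose g hg using hch
  have hcard : P.card ≤ (Finset.univ : Finset (Fin (coverNum X r))).card := by
    apply Finset.card_le_card_of_injOn g (fun a _ => Finset.mem_univ _)
    intro p hp q hq hpq
    by_contra hne'
    have hdpq : r < dist p q := hsep p hp q hq hne'
    have h1 : p ∈ B (g p) := hg p hp
    have h2 : q ∈ B (g p) := hpq ▸ hg q hq
    have : edist p q ≤ ENNReal.ofReal r :=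
      le_trans (EMetric.edist_le_diam_of_mem h1 h2) (hdiam _)
    rw [edist_le_ofReal hr.le] at this
    linarith
  simpa using hcard

lemma sep_aux {r : ℝ} (hr : 0 < r) {n m k : ℕ} (h1 : 1 ≤ n) (hnm : n < m) (hmk : m ≤ k)
    (hk : (k:ℝ) * k ≤ 1/r) : r < 1/(n:ℝ) - 1/(m:ℝ) := by
  have hx : (1:ℝ) ≤ n := by exact_mod_cast h1
  have hy : (n:ℝ) + 1 ≤ m := by exact_mod_cast hnm
  have hyk : (m:ℝ) ≤ k := by exact_mod_cast hmk
  have hxpos : (0:ℝ) < n := by linarith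
  have hypos : (0:ℝ) < m := by linarith
  have hxy : (n:ℝ) * m < 1/r := by nlinarith
  have hrxy : r * ((n:ℝ) * m) < 1 := by
    rw [lt_div_iff₀ hr] at hxy; linarith [hxy]
  have heq : 1/(n:ℝ) - 1/(m:ℝ) = ((m:ℝ) - n)/((n:ℝ)*m) := by
    field_simp
  rw [heq, lt_div_iff₀ (by positivity)]
  nlinarith

set_option maxHeartbeats 1000000
theorem stmt15 (θ : ℝ) (hθ : θ ∈ Ioo (0:ℝ) (1/2)) :
    ∃ c > (0:ℝ), ∀ r ∈ Ioo (0:ℝ) (1/2),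
      c * (r ^ θ / r) ^ ((1/2) / (1 - θ)) ≤
        (coverNum (recipSet ∩ closedBall (0:ℝ) (r ^ θ)) r : ℝ) := by
  classical
  obtain ⟨hθ0, hθ2⟩ := hθ
  have hhalf : (0:ℝ) < 1/2 - θ := by linarith
  set e : ℝ := 1/(1/2 - θ) with hedef
  set r₀ : ℝ := (1/4:ℝ) ^ e with hr₀def
  have hr₀pos : 0 < r₀ := Real.rpow_pos_of_pos (by norm_num) _
  have he2 : 2 ≤ e := by
    rw [hedef, le_div_iff₀ hhalf]; linarith
  have hr₀16 : r₀ ≤ 1/16 := by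
    have := Real.rpow_le_rpow_of_exponent_ge (x := (1/4:ℝ)) (by norm_num) (by norm_num) he2
    calc r₀ ≤ (1/4:ℝ) ^ (2:ℝ) := this
      _ = 1/16 := by rw [Real.rpow_two]; norm_num
  refine ⟨min (r₀ ^ ((1:ℝ)/2)) (1/2),
    lt_min (Real.rpow_pos_of_pos hr₀pos _) (by norm_num), ?_⟩
  rintro r ⟨hr0, hr2⟩
  have hr1 : r < 1 := by linarith
  have h1θ : (1:ℝ) - θ ≠ 0 := by intro h; nlinarith [h]
  -- rewrite the power
  have hrkey : (r ^ θ / r) ^ ((1/2) / (1 - θ)) = r ^ (-(1/2) : ℝ) := by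
    have h1 : r ^ θ / r = r ^ (θ - 1) := by
      rw [Real.rpow_sub hr0, Real.rpow_one]
    have h2 : (θ - 1) * ((1/2)/(1-θ)) = -(1/2) := by
      field_simp
      ring
    rw [h1, ← Real.rpow_mul hr0.le, h2]
  rw [hrkey]
  have hrns : (0:ℝ) < r ^ (-(1/2):ℝ) := Real.rpow_pos_of_pos hr0 _
  -- existence of a cover of the intersection
  have hex : ∃ n, coversWith (recipSet ∩ closedBall (0:ℝ) (r ^ θ)) r n := by
    obtain ⟨B, h1', h2'⟩ := coversWith_recipSet hr0
    exact ⟨_, B, h1', (inter_subset_left).trans h2'⟩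
  have hrθpos : 0 < r ^ θ := Real.rpow_pos_of_pos hr0 _
  -- the point 1/n belongs when (n:ℝ) ≥ r^(-θ)
  have hmem : ∀ n : ℕ, 1 ≤ n → r ^ (-θ) ≤ (n:ℝ) →
      1/(n:ℝ) ∈ recipSet ∩ closedBall (0:ℝ) (r ^ θ) := by
    intro n hn1 hnθ
    refine ⟨⟨n, hn1, rfl⟩, ?_⟩
    rw [Metric.mem_closedBall, Real.dist_eq, sub_zero]
    have hnpos : (0:ℝ) < n := by exact_mod_cast hn1
    have h1n : 1/(n:ℝ) ≤ r ^ θ := by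
      rw [div_le_iff₀ hnpos]
      rw [Real.rpow_neg hr0.le, inv_le_iff_one_le_mul₀' hrθpos] at hnθ
      linarith [hnθ]
    rw [abs_of_pos (by positivity)]
    exact h1n
  by_cases hsmall : r ≤ r₀
  · -- good scale: many separated points
    set a : ℕ := ⌈r ^ (-θ)⌉₊ with hadef
    set k : ℕ := ⌊r ^ (-(1/2):ℝ)⌋₊ with hkdef
    have hnegθ : (1:ℝ) < r ^ (-θ) := by
      rw [Real.rpow_neg hr0.le]
      rw [one_lt_inv_iff₀]
      exact ⟨hrθpos, Real.rpow_lt_one hr0.le hr1 hθ0⟩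
    have ha1 : 1 ≤ a := Nat.ceil_pos.mpr (by positivity)
    have ha_ge : r ^ (-θ) ≤ (a:ℝ) := Nat.le_ceil _
    have ha_lt : (a:ℝ) < r ^ (-θ) + 1 := Nat.ceil_lt_add_one (by positivity)
    have hk_le : (k:ℝ) ≤ r ^ (-(1/2):ℝ) := Nat.floor_le (by positivity)
    have hk_gt : r ^ (-(1/2):ℝ) - 1 < (k:ℝ) := Nat.sub_one_lt_floor _
    -- 4 ≤ r^(-1/2)
    have hr16 : r ≤ 1/16 := le_trans hsmall hr₀16
    have hrh : r ^ ((1:ℝ)/2) ≤ 1/4 := by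
      calc r ^ ((1:ℝ)/2) ≤ (1/16:ℝ) ^ ((1:ℝ)/2) :=
            Real.rpow_le_rpow hr0.le hr16 (by norm_num)
        _ = 1/4 := by
            rw [show (1/16:ℝ) = (1/4:ℝ)^(2:ℕ) by norm_num, ← Real.rpow_natCast (1/4:ℝ) 2,
              ← Real.rpow_mul (by norm_num)]
            norm_num
    have h4 : 4 ≤ r ^ (-(1/2):ℝ) := by
      have hp : 0 < r ^ ((1:ℝ)/2) := Real.rpow_pos_of_pos hr0 _
      rw [show (-(1/2):ℝ) = -(1/2) by norm_num, Real.rpow_neg hr0.le,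
        le_inv_comm₀ (by norm_num) hp]
      calc r ^ ((1:ℝ)/2) ≤ 1/4 := hrh
        _ = (4:ℝ)⁻¹ := by norm_num
    -- r^(-θ) ≤ (1/4) r^(-1/2)
    have h5 : r ^ ((1/2:ℝ) - θ) ≤ 1/4 := by
      calc r ^ ((1/2:ℝ) - θ) ≤ r₀ ^ ((1/2:ℝ) - θ) :=
            Real.rpow_le_rpow hr0.le hsmall hhalf.le
        _ = (1/4:ℝ) ^ (e * (1/2 - θ)) := by
            rw [hr₀def, ← Real.rpow_mul (by norm_num)]
        _ = 1/4 := by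
            rw [show e * (1/2 - θ) = 1 by rw [hedef, one_div, inv_mul_cancel₀ hhalf.ne'], Real.rpow_one]
    have hq : r ^ (-θ) ≤ (1/4) * r ^ (-(1/2):ℝ) := by
      have := mul_le_mul_of_nonneg_right h5 (le_of_lt hrns)
      rw [← Real.rpow_add hr0, show (1/2 - θ) + (-(1/2)) = -θ by ring] at this
      linarith [this]
    have hak : a < k := by
      have : (a:ℝ) < (k:ℝ) := by nlinarith
      exact_mod_cast this
    -- the finset of points
    set P : Finset ℝ := (Finset.Icc a k).image (fun n : ℕ => 1/(n:ℝ)) with hPdef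
    have hinj : Set.InjOn (fun n : ℕ => 1/(n:ℝ)) (Finset.Icc a k) := by
      intro n hn m hm h
      simp only [Finset.coe_Icc, mem_Icc] at hn hm
      have hn0 : (n:ℝ) ≠ 0 := by
        have : 1 ≤ n := le_trans ha1 hn.1
        positivity
      have hm0 : (m:ℝ) ≠ 0 := by
        have : 1 ≤ m := le_trans ha1 hm.1
        positivity
      field_simp at h
      exact_mod_cast h.symm
    have hcard : P.card = k + 1 - a := by
      rw [hPdef, Finset.card_image_of_injOn hinj, Nat.card_Icc]
    have hcardR : ((1:ℝ)/2) * r ^ (-(1/2):ℝ) ≤ (P.card : ℝ) := by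
      have hsub : ((k + 1 - a : ℕ) : ℝ) = (k:ℝ) + 1 - a := by
        have : a ≤ k + 1 := by omega
        push_cast [Nat.cast_sub this]
        ring
      rw [hcard, hsub]
      nlinarith
    -- separation and membership
    have hk2 : (k:ℝ) * k ≤ 1/r := by
      have : r ^ (-(1/2):ℝ) * r ^ (-(1/2):ℝ) = 1/r := by
        rw [← Real.rpow_add hr0, show (-(1/2):ℝ) + (-(1/2)) = -1 by ring,
          Real.rpow_neg_one, one_div]
      nlinarith
    have hsep : ∀ p ∈ P, ∀ q ∈ P, p ≠ q → r < dist p q := by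
      intro p hp q hq hpq
      simp only [hPdef, Finset.mem_image, Finset.mem_Icc] at hp hq
      obtain ⟨n, ⟨han, hnk⟩, rfl⟩ := hp
      obtain ⟨m, ⟨ham, hmk⟩, rfl⟩ := hq
      have hnm : n ≠ m := fun h => hpq (by rw [h])
      rcases lt_or_gt_of_ne hnm with h | h
      · have := sep_aux hr0 (le_trans ha1 han) h hmk hk2
        rw [Real.dist_eq, abs_of_pos (by linarith)]
        linarith
      · have := sep_aux hr0 (le_trans ha1 ham) h hnk hk2
        rw [Real.dist_eq, abs_of_neg (by linarith)]
        linarith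
    have hPmem : ∀ p ∈ P, p ∈ recipSet ∩ closedBall (0:ℝ) (r ^ θ) := by
      intro p hp
      simp only [hPdef, Finset.mem_image, Finset.mem_Icc] at hp
      obtain ⟨n, ⟨han, hnk⟩, rfl⟩ := hp
      exact hmem n (le_trans ha1 han) (le_trans ha_ge (by exact_mod_cast han))
    have hN := card_le_coverNum hr0 P hPmem hsep hex
    have hNR : (P.card : ℝ) ≤ (coverNum (recipSet ∩ closedBall (0:ℝ) (r ^ θ)) r : ℝ) := by
      exact_mod_cast hN
    have hc : min (r₀ ^ ((1:ℝ)/2)) (1/2) ≤ 1/2 := min_le_right _ _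
    nlinarith
  · -- r₀ < r : trivial bound by 1
    push_neg at hsmall
    set m : ℕ := ⌈r ^ (-θ)⌉₊ with hmdef
    have hnegθ : (0:ℝ) < r ^ (-θ) := Real.rpow_pos_of_pos hr0 _
    have hm1 : 1 ≤ m := Nat.ceil_pos.mpr (by positivity)
    have hN := card_le_coverNum hr0 {1/(m:ℝ)}
      (by
        intro p hp
        simp only [Finset.mem_singleton] at hp
        subst hp
        exact hmem m hm1 (Nat.le_ceil _))
      (by
        intro p hp q hq hpq
        simp only [Finset.mem_singleton] at hp hq
        exact absurd (hp.trans hq.symm) hpq) hex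
    simp only [Finset.card_singleton] at hN
    have hNR : (1:ℝ) ≤ (coverNum (recipSet ∩ closedBall (0:ℝ) (r ^ θ)) r : ℝ) := by
      exact_mod_cast hN
    have hc : min (r₀ ^ ((1:ℝ)/2)) (1/2) ≤ r₀ ^ ((1:ℝ)/2) := min_le_left _ _
    have hmono : r ^ (-(1/2):ℝ) ≤ r₀ ^ (-(1/2):ℝ) := by
      rw [Real.rpow_neg hr0.le, Real.rpow_neg hr₀pos.le]
      apply inv_anti₀ (Real.rpow_pos_of_pos hr₀pos _)
      exact Real.rpow_le_rpow hr₀pos.le hsmall.le (by norm_num)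
    have hprod : r₀ ^ ((1:ℝ)/2) * r₀ ^ (-(1/2):ℝ) = 1 := by
      rw [← Real.rpow_add hr₀pos, show (1:ℝ)/2 + (-(1/2)) = 0 by ring, Real.rpow_zero]
    have h0c : 0 < min (r₀ ^ ((1:ℝ)/2)) (1/2) :=
      lt_min (Real.rpow_pos_of_pos hr₀pos _) (by norm_num)
    calc min (r₀ ^ ((1:ℝ)/2)) (1/2) * r ^ (-(1/2):ℝ)
        ≤ r₀ ^ ((1:ℝ)/2) * r₀ ^ (-(1/2):ℝ) := by
          apply mul_le_mul hc hmono (le_of_lt hrns) (Real.rpow_pos_of_pos hr₀pos _).le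
      _ = 1 := hprod
      _ ≤ _ := hNR
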